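/- Let A be an additive abelian group and let γ, δ be endogenies of A. If γ and δ commute sharply, i.e. im(γ ∘ δ − δ ∘ γ) ⊆ kat γ + kat δ, then in fact equality holds: im(γ ∘ δ − δ ∘ γ) = kat γ + kat δ. -/

import Mathlib

open Pointwise

variable {A : Type*} [AddCommGroup A]

/-- The fibre `γ[a]` of a relation `γ ⊆ A × A` over `a`. -/
def fib (γ : Set (A × A)) (a : A) : Set A := {b | (a, b) ∈ γ}

/-- The image `γ[S]` of a set `S ⊆ A` under a relation `γ ⊆ A × A`. -/
def eimg (γ : Set (A × A)) (S : Set A) : Set A := {b | ∃ a ∈ S, (a, b) ∈ γ}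

/-- The katakernel `kat γ = γ[0]`. -/
def kat (γ : Set (A × A)) : Set A := {b | ((0 : A), b) ∈ γ}

/-- The image `im γ = γ[A]`. -/
def eim (γ : Set (A × A)) : Set A := {b | ∃ a, (a, b) ∈ γ}

/-- `γ` is (the carrier of) an additive subgroup of `A × A`. -/
def IsAddSubgroupSet (γ : Set (A × A)) : Prop :=
  (0 : A × A) ∈ γ ∧ (∀ p ∈ γ, ∀ q ∈ γ, p + q ∈ γ) ∧ (∀ p ∈ γ, -p ∈ γ)

/-- An endogeny of `A`: an additive subgroup of `A × A` projecting onto `A`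
with finite katakernel. -/
def IsEndogeny (γ : Set (A × A)) : Prop :=
  IsAddSubgroupSet γ ∧ (∀ a : A, ∃ b : A, (a, b) ∈ γ) ∧ (kat γ).Finite

/-- Pointwise sum of endogenies. -/
def esum (γ₁ γ₂ : Set (A × A)) : Set (A × A) :=
  {p | ∃ b₁ b₂ : A, (p.1, b₁) ∈ γ₁ ∧ (p.1, b₂) ∈ γ₂ ∧ p.2 = b₁ + b₂}

/-- Pointwise negation of an endogeny. -/
def eneg (γ : Set (A × A)) : Set (A × A) := {p | (p.1, -p.2) ∈ γ}

/-- Pointwise difference of endogenies. -/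
def esub (γ₁ γ₂ : Set (A × A)) : Set (A × A) := esum γ₁ (eneg γ₂)

/-- Composition of endogenies (as relations): `(a, c) ∈ γ₁ ∘ γ₂` iff
`∃ b, b ∈ γ₂[a]` and `c ∈ γ₁[b]`. -/
def ecomp (γ₁ γ₂ : Set (A × A)) : Set (A × A) :=
  {p | ∃ b : A, (p.1, b) ∈ γ₂ ∧ (b, p.2) ∈ γ₁}

/-- Sharp commutation: `im (γ ∘ δ − δ ∘ γ) ⊆ kat γ + kat δ`. -/
def SharpCommute (γ δ : Set (A × A)) : Prop :=
  eim (esub (ecomp γ δ) (ecomp δ γ)) ⊆ kat γ + kat δ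

/-- Equivalence of endogenies: they agree modulo a finite subgroup. -/
def EEquiv (γ₁ γ₂ : Set (A × A)) : Prop :=
  ∃ F : AddSubgroup A, (F : Set A).Finite ∧
    ∀ a : A, fib γ₁ a + (F : Set A) = fib γ₂ a + (F : Set A)

/-- A prering of endogenies: a set of endogenies closed under `+`, `−` and `∘`. -/
def IsPrering (Γ : Set (Set (A × A))) : Prop :=
  (∀ γ ∈ Γ, IsEndogeny γ) ∧ (∀ γ ∈ Γ, ∀ δ ∈ Γ, esum γ δ ∈ Γ) ∧
  (∀ γ ∈ Γ, eneg γ ∈ Γ) ∧ (∀ γ ∈ Γ, ∀ δ ∈ Γ, ecomp γ δ ∈ Γ)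

/-- The katakernel of a prering: the subgroup generated by all the katakernels. -/
def Kat (Γ : Set (Set (A × A))) : AddSubgroup A :=
  AddSubgroup.closure (⋃ γ ∈ Γ, kat γ)

lemma isAddSubgroupSet_ecomp {γ δ : Set (A × A)} (hγ : IsAddSubgroupSet γ)
    (hδ : IsAddSubgroupSet δ) : IsAddSubgroupSet (ecomp γ δ) := by
  obtain ⟨h0γ, haγ, hnγ⟩ := hγ
  obtain ⟨h0δ, haδ, hnδ⟩ := hδ
  refine ⟨⟨0, h0δ, h0γ⟩, ?_, ?_⟩
  · rintro p ⟨b, hb, hb'⟩ q ⟨c, hc, hc'⟩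
    exact ⟨b + c, haδ _ hb _ hc, haγ _ hb' _ hc'⟩
  · rintro p ⟨b, hb, hb'⟩
    exact ⟨-b, hnδ _ hb, hnγ _ hb'⟩

lemma isAddSubgroupSet_eneg {γ : Set (A × A)} (hγ : IsAddSubgroupSet γ) :
    IsAddSubgroupSet (eneg γ) := by
  obtain ⟨h0, ha, hn⟩ := hγ
  refine ⟨by simp only [eneg, Set.mem_setOf_eq, Prod.fst_zero, Prod.snd_zero, neg_zero]; exact h0, ?_, ?_⟩
  · intro p hp q hq
    have := ha _ hp _ hq
    simpa [eneg, neg_add, add_comm] using this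
  · intro p hp
    have := hn _ hp
    simpa [eneg] using this

lemma isAddSubgroupSet_esum {γ δ : Set (A × A)} (hγ : IsAddSubgroupSet γ)
    (hδ : IsAddSubgroupSet δ) : IsAddSubgroupSet (esum γ δ) := by
  obtain ⟨h0γ, haγ, hnγ⟩ := hγ
  obtain ⟨h0δ, haδ, hnδ⟩ := hδ
  refine ⟨⟨0, 0, h0γ, h0δ, by simp⟩, ?_, ?_⟩
  · rintro p ⟨b₁, b₂, hb₁, hb₂, hp⟩ q ⟨c₁, c₂, hc₁, hc₂, hq⟩
    exact ⟨b₁ + c₁, b₂ + c₂, haγ _ hb₁ _ hc₁, haδ _ hb₂ _ hc₂,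
      by simp [hp, hq]; abel⟩
  · rintro p ⟨b₁, b₂, hb₁, hb₂, hp⟩
    exact ⟨-b₁, -b₂, hnγ _ hb₁, hnδ _ hb₂, by simp [hp]; abel⟩

/-- if `γ` and `δ` commute sharply, i.e.
`im (γ ∘ δ − δ ∘ γ) ⊆ kat γ + kat δ`, then equality holds. -/
theorem sharpCommute_im_eq (γ δ : Set (A × A))
    (hγ : IsEndogeny γ) (hδ : IsEndogeny δ) (h : SharpCommute γ δ) :
    eim (esub (ecomp γ δ) (ecomp δ γ)) = kat γ + kat δ := by
  apply Set.Subset.antisymm h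
  rintro x ⟨k, hk, l, hl, rfl⟩
  obtain ⟨hγs, hγsur, -⟩ := hγ
  obtain ⟨hδs, hδsur, -⟩ := hδ
  obtain ⟨c, hc⟩ := hγsur l
  obtain ⟨d, hd⟩ := hδsur k
  have hε : IsAddSubgroupSet (esub (ecomp γ δ) (ecomp δ γ)) :=
    isAddSubgroupSet_esum (isAddSubgroupSet_ecomp hγs hδs)
      (isAddSubgroupSet_eneg (isAddSubgroupSet_ecomp hδs hγs))
  have hlck : (l, c + k) ∈ γ := by simpa using hγs.2.1 _ hc _ hk
  have hkdl : (k, d + l) ∈ δ := by simpa using hδs.2.1 _ hd _ hl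
  have h1 : ((0 : A), c + k - d) ∈ esub (ecomp γ δ) (ecomp δ γ) :=
    ⟨c + k, -d, ⟨l, hl, hlck⟩, by simpa [eneg, ecomp] using ⟨k, hk, hd⟩,
      by abel⟩
  have h2 : ((0 : A), c - d - l) ∈ esub (ecomp γ δ) (ecomp δ γ) :=
    ⟨c, -(d + l), ⟨l, hl, hc⟩, by simpa [eneg, ecomp] using ⟨k, hk, hkdl⟩,
      by abel⟩
  have h3 := hε.2.1 _ h1 _ (hε.2.2 _ h2)
  refine ⟨0, ?_⟩
  have heq : ((0 : A), k + l) = (0, c + k - d) + -(0, c - d - l) := by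
    simp [Prod.ext_iff]
    abel
  rw [heq]
  exact h3
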